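/- Let f = (f₁,f₂,f₃) : 𝔻 → 𝔼 be holomorphic with f(0) = (0,0,0), satisfying f₃(λ) - f₂(λ) = λ(f₁(λ) - 1) for all λ ∈ 𝔻 (i.e. Ψ₁ ∘ f = id), and suppose there exist a ∈ ℂ, C ∈ ℝ such that (f₁(λ)f₂(λ) - f₃(λ))/(f₁(λ) - 1)² = conj(a)λ² + Cλ + a for all λ ∈ 𝔻. Then a = 0, C ∈ [0,1], and there exists a holomorphic φ : 𝔻 → closure(𝔻) with φ(0) = -C such that f₁(λ) = (φ(λ)+C)/(1+C), f₂(λ) = λ(1 + Cφ(λ))/(1+C), f₃(λ) = λφ(λ). -/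

import Mathlib

open Complex Metric Filter Set Topology

def tetrablock : Set (ℂ × ℂ × ℂ) :=
  {z | ‖z.1 - (starRingEnd ℂ) z.2.1 * z.2.2‖ +
       ‖z.2.1 - (starRingEnd ℂ) z.1 * z.2.2‖ +
       ‖z.2.2‖ ^ 2 < 1}

lemma tetra_bounds {z : ℂ × ℂ × ℂ} (hz : z ∈ tetrablock) :
    ‖z.1‖ < 1 ∧ ‖z.2.1‖ < 1 ∧ ‖z.2.2‖ < 1 := by
  obtain ⟨z₁, z₂, z₃⟩ := z
  simp only [tetrablock, Set.mem_setOf_eq] at hz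
  set A := ‖z₁ - (starRingEnd ℂ) z₂ * z₃‖ with hA
  set B := ‖z₂ - (starRingEnd ℂ) z₁ * z₃‖ with hB
  set t := ‖z₃‖ with ht
  have hA0 : 0 ≤ A := norm_nonneg _
  have hB0 : 0 ≤ B := norm_nonneg _
  have ht0 : 0 ≤ t := norm_nonneg _
  have ht1 : t < 1 := by nlinarith
  have h1 : ‖z₁‖ ≤ A + ‖z₂‖ * t := by
    calc ‖z₁‖ = ‖(z₁ - (starRingEnd ℂ) z₂ * z₃) + (starRingEnd ℂ) z₂ * z₃‖ := by ring_nf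
    _ ≤ A + ‖(starRingEnd ℂ) z₂ * z₃‖ := norm_add_le _ _
    _ = A + ‖z₂‖ * t := by rw [norm_mul, Complex.norm_conj]
  have h2 : ‖z₂‖ ≤ B + ‖z₁‖ * t := by
    calc ‖z₂‖ = ‖(z₂ - (starRingEnd ℂ) z₁ * z₃) + (starRingEnd ℂ) z₁ * z₃‖ := by ring_nf
    _ ≤ B + ‖(starRingEnd ℂ) z₁ * z₃‖ := norm_add_le _ _
    _ = B + ‖z₁‖ * t := by rw [norm_mul, Complex.norm_conj]
  refine ⟨?_, ?_, ht1⟩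
  · nlinarith [norm_nonneg z₁, norm_nonneg z₂]
  · nlinarith [norm_nonneg z₁, norm_nonneg z₂]

lemma abs_le_one_at_zero {h : ℂ → ℂ} (hd : ContinuousWithinAt h (ball (0 : ℂ) 1) 0)
    (hb : ∀ l ∈ ball (0 : ℂ) 1, l ≠ 0 → ‖h l‖ ≤ 1) :
    ‖h 0‖ ≤ 1 := by
  have hball : ball (0 : ℂ) 1 ∈ 𝓝[≠] (0 : ℂ) :=
    mem_nhdsWithin_of_mem_nhds (isOpen_ball.mem_nhds (by simp))
  have hkey : 𝓝[ball (0 : ℂ) 1 \ {0}] (0 : ℂ) = 𝓝[≠] (0 : ℂ) := by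
    rw [Set.diff_eq]
    exact nhdsWithin_inter_of_mem hball
  have hne : (𝓝[ball (0 : ℂ) 1 \ {0}] (0 : ℂ)).NeBot := by
    rw [hkey]; infer_instance
  have htend : Tendsto (fun l => ‖h l‖) (𝓝[ball (0 : ℂ) 1 \ {0}] (0 : ℂ))
      (𝓝 (‖h 0‖)) :=
    (continuous_norm.continuousAt.tendsto.comp (hd.mono Set.diff_subset))
  refine le_of_tendsto htend ?_
  filter_upwards [self_mem_nhdsWithin] with l hl
  exact hb l hl.1 hl.2

theorem stmt13 (f₁ f₂ f₃ : ℂ → ℂ)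
    (hf₁ : DifferentiableOn ℂ f₁ (ball (0 : ℂ) 1))
    (hf₂ : DifferentiableOn ℂ f₂ (ball (0 : ℂ) 1))
    (hf₃ : DifferentiableOn ℂ f₃ (ball (0 : ℂ) 1))
    (hfm : ∀ l ∈ ball (0 : ℂ) 1, (f₁ l, f₂ l, f₃ l) ∈ tetrablock)
    (hf0 : f₁ 0 = 0 ∧ f₂ 0 = 0 ∧ f₃ 0 = 0)
    (hid : ∀ l ∈ ball (0 : ℂ) 1, f₃ l - f₂ l = l * (f₁ l - 1))
    (a : ℂ) (C : ℝ)
    (heq : ∀ l ∈ ball (0 : ℂ) 1,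
      (f₁ l * f₂ l - f₃ l) / (f₁ l - 1) ^ 2
        = (starRingEnd ℂ) a * l ^ 2 + C * l + a) :
    a = 0 ∧ C ∈ Set.Icc (0 : ℝ) 1 ∧
      ∃ φ : ℂ → ℂ, DifferentiableOn ℂ φ (ball (0 : ℂ) 1) ∧
        (∀ l ∈ ball (0 : ℂ) 1, φ l ∈ closedBall (0 : ℂ) 1) ∧
        φ 0 = -(C : ℂ) ∧
        ∀ l ∈ ball (0 : ℂ) 1,
          f₁ l = (φ l + C) / (1 + C) ∧
          f₂ l = l * (1 + C * φ l) / (1 + C) ∧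
          f₃ l = l * φ l := by
  obtain ⟨h10, h20, h30⟩ := hf0
  have h01 : (0 : ℂ) ∈ ball (0 : ℂ) 1 := by simp
  -- a = 0
  have ha : a = 0 := by
    have := heq 0 h01
    simp [h10, h20, h30] at this
    exact this.symm
  subst ha
  -- bounds from tetrablock
  have hb := fun l hl => tetra_bounds (hfm l hl)
  have hne : ∀ l ∈ ball (0 : ℂ) 1, f₁ l - 1 ≠ 0 := by
    intro l hl
    intro h
    have h' : f₁ l = 1 := by linear_combination h
    have := (hb l hl).1
    rw [h'] at this
    simp at this
  set φ : ℂ → ℂ := fun l => (1 + (C : ℂ)) * f₁ l - C with hφ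
  set g : ℂ → ℂ := fun l => (C : ℂ) * f₁ l + (1 - C) with hg
  -- key identity f₃ = l * φ
  have h3 : ∀ l ∈ ball (0 : ℂ) 1, f₃ l = l * φ l := by
    intro l hl
    have h1 := heq l hl
    simp only [map_zero, zero_mul, add_zero, zero_add] at h1
    rw [div_eq_iff (pow_ne_zero 2 (hne l hl))] at h1
    have h2 := hid l hl
    have key : (f₁ l - 1) * (f₃ l - l * φ l) = 0 := by
      simp only [hφ]
      linear_combination h1 + f₁ l * h2
    rcases mul_eq_zero.1 key with h | h
    · exact absurd h (hne l hl)
    · linear_combination h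
  -- f₂ = l * g
  have h2g : ∀ l ∈ ball (0 : ℂ) 1, f₂ l = l * g l := by
    intro l hl
    have h2 := hid l hl
    have h3' := h3 l hl
    simp only [hφ] at h3'
    simp only [hg]
    linear_combination h3' - h2
  -- Schwarz
  have hmaps2 : Set.MapsTo f₂ (ball (0 : ℂ) 1) (ball (0 : ℂ) 1) := by
    intro l hl; exact mem_ball_zero_iff.2 (hb l hl).2.1
  have hmaps3 : Set.MapsTo f₃ (ball (0 : ℂ) 1) (ball (0 : ℂ) 1) := by
    intro l hl; exact mem_ball_zero_iff.2 (hb l hl).2.2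
  have hS2 : ∀ l ∈ ball (0 : ℂ) 1, ‖f₂ l‖ ≤ ‖l‖ := by
    intro l hl
    exact Complex.norm_le_norm_of_mapsTo_ball hf₂ (hmaps2.mono_right ball_subset_closedBall) h20 (by simpa using hl)
  have hS3 : ∀ l ∈ ball (0 : ℂ) 1, ‖f₃ l‖ ≤ ‖l‖ := by
    intro l hl
    exact Complex.norm_le_norm_of_mapsTo_ball hf₃ (hmaps3.mono_right ball_subset_closedBall) h30 (by simpa using hl)
  -- |φ| ≤ 1 away from 0
  have hφb : ∀ l ∈ ball (0 : ℂ) 1, l ≠ 0 → ‖φ l‖ ≤ 1 := by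
    intro l hl hl0
    have := hS3 l hl
    rw [h3 l hl, norm_mul] at this
    have habs : 0 < ‖l‖ := norm_pos_iff.2 hl0
    exact le_of_mul_le_mul_left (by simpa using this) habs
  have hgb : ∀ l ∈ ball (0 : ℂ) 1, l ≠ 0 → ‖g l‖ ≤ 1 := by
    intro l hl hl0
    have := hS2 l hl
    rw [h2g l hl, norm_mul] at this
    have habs : 0 < ‖l‖ := norm_pos_iff.2 hl0
    exact le_of_mul_le_mul_left (by simpa using this) habs
  -- continuity at 0 gives bounds on C
  have hφd : DifferentiableOn ℂ φ (ball (0 : ℂ) 1) := by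
    simp only [hφ]; fun_prop
  have hgd : DifferentiableOn ℂ g (ball (0 : ℂ) 1) := by
    simp only [hg]; fun_prop
  have hφ0 : φ 0 = -(C : ℂ) := by simp [hφ, h10]
  have hg0 : g 0 = 1 - (C : ℂ) := by simp [hg, h10]
  have hCle : |C| ≤ 1 := by
    have := abs_le_one_at_zero (hφd.continuousOn 0 h01) hφb
    rw [hφ0] at this
    simpa [Complex.norm_real] using this
  have hC2 : |1 - C| ≤ 1 := by
    have h := abs_le_one_at_zero (hgd.continuousOn 0 h01) hgb
    rw [hg0] at h
    rw [← Real.norm_eq_abs, ← Complex.norm_real]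
    convert h using 2
    push_cast; ring
  have hC0 : 0 ≤ C := by have := abs_le.1 hC2; linarith [this.2]
  have hC1 : C ≤ 1 := (abs_le.1 hCle).2
  have h1Cne : (1 : ℂ) + C ≠ 0 := by
    have : ((1 + C : ℝ) : ℂ) ≠ 0 := by
      exact_mod_cast (by linarith : (1 + C : ℝ) ≠ 0)
    push_cast at this; exact this
  refine ⟨rfl, ⟨hC0, hC1⟩, φ, hφd, ?_, hφ0, ?_⟩
  · intro l hl
    rw [mem_closedBall_zero_iff]
    rcases eq_or_ne l 0 with rfl | hl0
    · rw [hφ0]; simpa [Complex.norm_real] using hCle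
    · exact hφb l hl hl0
  · intro l hl
    refine ⟨?_, ?_, h3 l hl⟩
    · rw [eq_div_iff h1Cne]; simp only [hφ]; ring
    · rw [h2g l hl, eq_div_iff h1Cne]; simp only [hg, hφ]; ring
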